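/- The decision (δ₀,δ₁) = (1/5, 4/5) is the unique minimax decision: sup_{θ ∈ [0,1]} R_{(1/5,4/5)}(θ) = log(5/4), and for every decision (δ₀,δ₁) ∈ [0,1]² with (δ₀,δ₁) ≠ (1/5, 4/5) one has sup_{θ ∈ [0,1]} R_{(δ₀,δ₁)}(θ) > log(5/4). -/

import Mathlib

open scoped ENNReal

/-- The Kullback–Leibler loss `L(θ,d) = θ·log(θ/d) + (1−θ)·log((1−θ)/(1−d)) ∈ [0,∞]`,
with the conventions `0 · log(0/c) = 0` and `c · log(c/0) = +∞` for `c > 0`.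
(When `θ = 0` or `θ = 1`, the corresponding vanishing term is `0` automatically
since `Real.log 0 = 0` in Lean.) -/
noncomputable def KLoss (θ d : ℝ) : ℝ≥0∞ :=
  if (θ ≠ 0 ∧ d = 0) ∨ (θ ≠ 1 ∧ d = 1) then ⊤
  else ENNReal.ofReal
    (θ * Real.log (θ / d) + (1 - θ) * Real.log ((1 - θ) / (1 - d)))

/-- The risk function `R_δ(θ) = (1−θ)·L(θ,δ₀) + θ·L(θ,δ₁) ∈ [0,∞]`
of a decision `δ = (δ₀, δ₁)`. -/
noncomputable def risk (δ : ℝ × ℝ) (θ : ℝ) : ℝ≥0∞ :=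
  ENNReal.ofReal (1 - θ) * KLoss θ δ.1 + ENNReal.ofReal θ * KLoss θ δ.2

/-- `δ'` dominates `δ`: `R_{δ'} ≤ R_δ` on `[0,1]`, with strict inequality somewhere. -/
def Dominates (δ' δ : ℝ × ℝ) : Prop :=
  (∀ θ ∈ Set.Icc (0 : ℝ) 1, risk δ' θ ≤ risk δ θ) ∧
  (∃ θ ∈ Set.Icc (0 : ℝ) 1, risk δ' θ < risk δ θ)

/-! ### Auxiliary real-analysis lemmas -/

lemma log_ge_one_sub_inv {x : ℝ} (hx : 0 < x) : 1 - 1/x ≤ Real.log x := by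
  have h := Real.log_le_sub_one_of_pos (show (0:ℝ) < 1/x by positivity)
  rw [Real.log_div one_ne_zero (ne_of_gt hx), Real.log_one] at h
  linarith

lemma log4_eq : Real.log 4 = 2 * Real.log 2 := by
  rw [show (4:ℝ) = 2^2 by norm_num, Real.log_pow]; push_cast; ring

lemma log25_eq : Real.log 25 = 2 * Real.log 5 := by
  rw [show (25:ℝ) = 5^2 by norm_num, Real.log_pow]; push_cast; ring

lemma log54 : Real.log (5/4) = Real.log 5 - 2*Real.log 2 := by
  rw [Real.log_div (by norm_num) (by norm_num), log4_eq]

lemma log45 : Real.log (4/5) = - Real.log (5/4) := by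
  rw [show (4/5:ℝ) = (5/4)⁻¹ by norm_num, Real.log_inv]

lemma core_outer {θ : ℝ} (h0 : 0 < θ) (h1 : θ ≤ 1/4) :
    θ * Real.log θ + (1-θ) * Real.log (1-θ) + 4*θ*(1-θ)*Real.log 2 ≤ 0 := by
  have hl2 : Real.log 2 < 0.6931471808 := Real.log_two_lt_d9
  have hl2' : (0.6931471803:ℝ) < Real.log 2 := Real.log_two_gt_d9
  have h4 : Real.log (4*θ) ≤ 4*θ - 1 := Real.log_le_sub_one_of_pos (by linarith)
  have hθ : Real.log θ = Real.log (4*θ) - 2*Real.log 2 := by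
    rw [Real.log_mul (by norm_num) (ne_of_gt h0), ← log4_eq]; ring
  have h1θ : Real.log (1-θ) ≤ -θ := by
    have := Real.log_le_sub_one_of_pos (show (0:ℝ) < 1-θ by linarith); linarith
  have e1 : θ * Real.log (4*θ) ≤ θ * (4*θ-1) := mul_le_mul_of_nonneg_left h4 h0.le
  have e2 : (1-θ) * Real.log (1-θ) ≤ (1-θ) * (-θ) :=
    mul_le_mul_of_nonneg_left h1θ (by linarith)
  rw [hθ]
  nlinarith [mul_pos h0 (show (0:ℝ) < 1-θ by linarith), sq_nonneg (θ - 1/4)]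

lemma core_mid {t : ℝ} (h0 : 0 ≤ t) (h1 : t ≤ 1/2) :
    (1+t) * Real.log (1+t) + (1-t) * Real.log (1-t) ≤ 2 * Real.log 2 * t^2 := by
  have hl2 : (0.6931471803:ℝ) < Real.log 2 := Real.log_two_gt_d9
  have habs : |t| < 1 := by rw [abs_of_nonneg h0]; linarith
  have habs' : |(-t)| < 1 := by rw [abs_neg]; exact habs
  have hA := Real.abs_log_sub_add_sum_range_le habs 5
  have hB := Real.abs_log_sub_add_sum_range_le habs' 5
  simp only [Finset.sum_range_succ, Finset.sum_range_zero] at hA hB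
  rw [abs_of_nonneg h0] at hA
  rw [abs_neg, abs_of_nonneg h0] at hB
  norm_num at hA hB
  have hE : t^6/(1-t) ≤ 2*t^6 := by
    rw [div_le_iff₀ (by linarith)]
    nlinarith [pow_nonneg h0 6]
  have hA' : Real.log (1-t) ≤ -(t + t^2/2 + t^3/3 + t^4/4 + t^5/5) + 2*t^6 := by
    have := (abs_le.mp hA).2
    linarith
  have hB' : Real.log (1+t) ≤ (t - t^2/2 + t^3/3 - t^4/4 + t^5/5) + 2*t^6 := by
    have h := (abs_le.mp hB).2
    have : -t + t ^ 2 / 2 + (-t) ^ 3 / 3 + t ^ 4 / 4 + (-t) ^ 5 / 5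
        = -(t - t^2/2 + t^3/3 - t^4/4 + t^5/5) := by ring
    rw [this] at h
    linarith
  have e1 : (1+t) * Real.log (1+t) ≤ (1+t) * ((t - t^2/2 + t^3/3 - t^4/4 + t^5/5) + 2*t^6) :=
    mul_le_mul_of_nonneg_left hB' (by linarith)
  have e2 : (1-t) * Real.log (1-t) ≤ (1-t) * (-(t + t^2/2 + t^3/3 + t^4/4 + t^5/5) + 2*t^6) :=
    mul_le_mul_of_nonneg_left hA' (by linarith)
  nlinarith [sq_nonneg t, pow_nonneg h0 3, pow_nonneg h0 4, pow_nonneg h0 5, pow_nonneg h0 6,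
    sq_nonneg (t^2), sq_nonneg (t^3), mul_nonneg (mul_nonneg h0 h0) h0]

/-- The key entropy inequality: `θ log θ + (1−θ) log(1−θ) + 4θ(1−θ) log 2 ≤ 0` on `(0,1)`. -/
lemma core {θ : ℝ} (h0 : 0 < θ) (h1 : θ < 1) :
    θ * Real.log θ + (1-θ) * Real.log (1-θ) + 4*θ*(1-θ)*Real.log 2 ≤ 0 := by
  rcases le_or_gt θ (1/4) with h | h
  · exact core_outer h0 h
  rcases le_or_gt (3/4) θ with h' | h'
  · have := core_outer (show (0:ℝ) < 1-θ by linarith) (by linarith)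
    rw [sub_sub_cancel] at this
    nlinarith [this]
  rcases le_or_gt (1/2) θ with hm | hm
  · have := core_mid (t := 2*θ-1) (by linarith) (by linarith)
    rw [show (1:ℝ)+(2*θ-1) = 2*θ by ring, show (1:ℝ)-(2*θ-1) = 2*(1-θ) by ring,
      Real.log_mul two_ne_zero (ne_of_gt h0),
      Real.log_mul two_ne_zero (by intro hc; nlinarith : (1:ℝ)-θ ≠ 0)] at this
    nlinarith [this]
  · have := core_mid (t := 1-2*θ) (by linarith) (by linarith)
    rw [show (1:ℝ)+(1-2*θ) = 2*(1-θ) by ring, show (1:ℝ)-(1-2*θ) = 2*θ by ring,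
      Real.log_mul two_ne_zero (by intro hc; nlinarith : (1:ℝ)-θ ≠ 0),
      Real.log_mul two_ne_zero (ne_of_gt h0)] at this
    nlinarith [this]

/-- Nonnegativity of the KL loss (Gibbs' inequality). -/
lemma kl_nonneg {θ d : ℝ} (h0 : 0 ≤ θ) (h1 : θ ≤ 1) (hd0 : 0 < d) (hd1 : d < 1) :
    0 ≤ θ * Real.log (θ / d) + (1 - θ) * Real.log ((1 - θ) / (1 - d)) := by
  rcases eq_or_lt_of_le h0 with rfl | h0'
  · simp only [zero_div, Real.log_zero, mul_zero, zero_mul, sub_zero, zero_add, one_mul]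
    rw [Real.log_div one_ne_zero (by linarith), Real.log_one]
    nlinarith [Real.log_nonpos (by linarith) (by linarith : (1:ℝ)-d ≤ 1)]
  rcases eq_or_lt_of_le h1 with rfl | h1'
  · norm_num
    exact Real.log_nonpos hd0.le hd1.le
  · have e1 : 1 - d/θ ≤ Real.log (θ/d) := by
      have := log_ge_one_sub_inv (show (0:ℝ) < θ/d by positivity)
      rwa [one_div_div] at this
    have e2 : 1 - (1-d)/(1-θ) ≤ Real.log ((1-θ)/(1-d)) := by
      have := log_ge_one_sub_inv (show (0:ℝ) < (1-θ)/(1-d) by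
        apply div_pos <;> linarith)
      rwa [one_div_div] at this
    have m1 : θ * (1 - d/θ) ≤ θ * Real.log (θ/d) := mul_le_mul_of_nonneg_left e1 h0
    have m2 : (1-θ) * (1 - (1-d)/(1-θ)) ≤ (1-θ) * Real.log ((1-θ)/(1-d)) :=
      mul_le_mul_of_nonneg_left e2 (by linarith)
    have i1 : θ * (1 - d/θ) = θ - d := by field_simp
    have hne : (1:ℝ)-θ ≠ 0 := by linarith
    have i2 : (1-θ) * (1 - (1-d)/(1-θ)) = (1-θ) - (1-d) := by
      rw [mul_sub, mul_one, mul_div_cancel₀ _ hne]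
    linarith

lemma prod_log_le {x : ℝ} (h0 : 0 < x) (h1 : x ≤ 1/5) :
    Real.log x + Real.log (1-x) ≤ 2*Real.log 2 - 2*Real.log 5 := by
  rw [← Real.log_mul (ne_of_gt h0) (by intro h; nlinarith)]
  calc Real.log (x*(1-x)) ≤ Real.log (4/25) :=
        Real.log_le_log (by nlinarith) (by nlinarith)
    _ = 2*Real.log 2 - 2*Real.log 5 := by
        rw [Real.log_div (by norm_num) (by norm_num), log4_eq, log25_eq]

lemma prod_log_lt {x : ℝ} (h0 : 0 < x) (h1 : x < 1/5) :
    Real.log x + Real.log (1-x) < 2*Real.log 2 - 2*Real.log 5 := by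
  rw [← Real.log_mul (ne_of_gt h0) (by intro h; nlinarith)]
  calc Real.log (x*(1-x)) < Real.log (4/25) :=
        Real.log_lt_log (by nlinarith) (by nlinarith)
    _ = 2*Real.log 2 - 2*Real.log 5 := by
        rw [Real.log_div (by norm_num) (by norm_num), log4_eq, log25_eq]

/-! ### Risk computations -/

lemma risk0 : risk (1/5, 4/5) 0 = ENNReal.ofReal (Real.log (5/4)) := by
  simp [risk, KLoss]
  norm_num [log45]

lemma risk1 : risk (1/5, 4/5) 1 = ENNReal.ofReal (Real.log (5/4)) := by
  simp [risk, KLoss]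

lemma risk_le_mid {θ : ℝ} (h0 : 0 < θ) (h1 : θ < 1) :
    risk (1/5, 4/5) θ ≤ ENNReal.ofReal (Real.log (5/4)) := by
  have hA := kl_nonneg (d := 1/5) h0.le h1.le (by norm_num) (by norm_num)
  have hB := kl_nonneg (d := 4/5) h0.le h1.le (by norm_num) (by norm_num)
  simp only [risk, KLoss]
  rw [if_neg (by norm_num), if_neg (by norm_num)]
  rw [← ENNReal.ofReal_mul (by linarith : (0:ℝ) ≤ 1-θ), ← ENNReal.ofReal_mul h0.le,
    ← ENNReal.ofReal_add (mul_nonneg (by linarith) hA) (mul_nonneg h0.le hB)]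
  apply ENNReal.ofReal_le_ofReal
  have lθ5 : Real.log (θ/(1/5)) = Real.log θ + Real.log 5 := by
    rw [Real.log_div (ne_of_gt h0) (by norm_num), one_div, Real.log_inv]; ring
  have l1θ : Real.log ((1-θ)/(1-1/5)) = Real.log (1-θ) - (2*Real.log 2 - Real.log 5) := by
    rw [show (1:ℝ)-1/5 = 4/5 by norm_num, Real.log_div (by linarith : (1:ℝ)-θ ≠ 0) (by norm_num),
      Real.log_div (by norm_num : (4:ℝ) ≠ 0) (by norm_num), log4_eq]
  have lθ45 : Real.log (θ/(4/5)) = Real.log θ - (2*Real.log 2 - Real.log 5) := by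
    rw [Real.log_div (ne_of_gt h0) (by norm_num),
      Real.log_div (by norm_num : (4:ℝ) ≠ 0) (by norm_num), log4_eq]
  have l1θ5 : Real.log ((1-θ)/(1-4/5)) = Real.log (1-θ) + Real.log 5 := by
    rw [show (1:ℝ)-4/5 = 1/5 by norm_num,
      Real.log_div (by linarith : (1:ℝ)-θ ≠ 0) (by norm_num), one_div, Real.log_inv]; ring
  rw [lθ5, l1θ, lθ45, l1θ5, log54]
  nlinarith [core h0 h1]

lemma risk_zero_eq (δ : ℝ × ℝ) : risk δ 0 = KLoss 0 δ.1 := by simp [risk]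

lemma risk_one_eq (δ : ℝ × ℝ) : risk δ 1 = KLoss 1 δ.2 := by simp [risk]

/-! ### The main theorem -/

/-- The decision `(1/5, 4/5)` is the unique minimax decision: its worst-case risk equals
`log(5/4)`, and every other decision in `[0,1]²` has strictly larger worst-case risk
(the supremum being taken in the extended reals). -/
theorem minimax_decision :
    (⨆ θ ∈ Set.Icc (0 : ℝ) 1, risk (1 / 5, 4 / 5) θ) =
      ENNReal.ofReal (Real.log (5 / 4)) ∧
    ∀ δ : ℝ × ℝ, δ.1 ∈ Set.Icc (0 : ℝ) 1 → δ.2 ∈ Set.Icc (0 : ℝ) 1 →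
      δ ≠ (1 / 5, 4 / 5) →
      ENNReal.ofReal (Real.log (5 / 4)) < ⨆ θ ∈ Set.Icc (0 : ℝ) 1, risk δ θ := by
  have h0mem : (0:ℝ) ∈ Set.Icc (0:ℝ) 1 := by norm_num
  have h1mem : (1:ℝ) ∈ Set.Icc (0:ℝ) 1 := by norm_num
  have hhmem : (1/2:ℝ) ∈ Set.Icc (0:ℝ) 1 := by norm_num
  have hlogpos : 0 < Real.log (5/4) := Real.log_pos (by norm_num)
  constructor
  · apply le_antisymm
    · apply iSup₂_le
      intro θ hθ
      obtain ⟨ha, hb⟩ := hθ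
      rcases eq_or_lt_of_le ha with h | h0
      · rw [← h, risk0]
      rcases eq_or_lt_of_le hb with h | h1
      · rw [h, risk1]
      · exact risk_le_mid h0 h1
    · calc ENNReal.ofReal (Real.log (5/4)) = risk (1/5, 4/5) 0 := risk0.symm
        _ ≤ _ := le_biSup _ h0mem
  · rintro ⟨p, q⟩ ⟨hp0, hp1⟩ ⟨hq0, hq1⟩ hne
    simp only at hp0 hp1 hq0 hq1
    rcases lt_or_ge (1/5:ℝ) p with hp | hp
    · -- risk at θ = 0 exceeds log(5/4)
      refine lt_of_lt_of_le ?_ (le_biSup _ h0mem)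
      rw [risk_zero_eq]
      simp only
      by_cases h1 : p = 1
      · rw [KLoss, if_pos (Or.inr ⟨by norm_num, h1⟩)]
        exact ENNReal.ofReal_lt_top
      · have hlt : p < 1 := lt_of_le_of_ne hp1 h1
        rw [KLoss, if_neg (by rintro (⟨h, -⟩ | ⟨-, h⟩); exacts [h rfl, h1 h])]
        have e : (0:ℝ) * Real.log (0/p) + (1-0) * Real.log ((1-0)/(1-p))
            = - Real.log (1-p) := by
          rw [show (1:ℝ)-0 = 1 by norm_num, one_div, Real.log_inv]; ring
        rw [e]
        have hlog : Real.log (1-p) < Real.log (4/5) :=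
          Real.log_lt_log (by linarith) (by linarith)
        rw [log45] at hlog
        exact (ENNReal.ofReal_lt_ofReal_iff (by linarith)).mpr (by linarith)
    rcases lt_or_ge q (4/5:ℝ) with hq | hq
    · -- risk at θ = 1 exceeds log(5/4)
      refine lt_of_lt_of_le ?_ (le_biSup _ h1mem)
      rw [risk_one_eq]
      simp only
      by_cases h0 : q = 0
      · rw [KLoss, if_pos (Or.inl ⟨by norm_num, h0⟩)]
        exact ENNReal.ofReal_lt_top
      · have hqpos : 0 < q := lt_of_le_of_ne hq0 (Ne.symm h0)
        rw [KLoss, if_neg (by rintro (⟨-, h⟩ | ⟨h, -⟩); exacts [h0 h, h rfl])]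
        have e : (1:ℝ) * Real.log (1/q) + (1-1) * Real.log ((1-1)/(1-q))
            = - Real.log q := by
          rw [one_div, Real.log_inv]; ring
        rw [e]
        have hlog : Real.log q < Real.log (4/5) := Real.log_lt_log hqpos hq
        rw [log45] at hlog
        exact (ENNReal.ofReal_lt_ofReal_iff (by linarith)).mpr (by linarith)
    · -- p ≤ 1/5, q ≥ 4/5 : risk at θ = 1/2 exceeds log(5/4)
      have hstrict : p < 1/5 ∨ 4/5 < q := by
        by_contra hc
        push_neg at hc
        exact hne (by rw [Prod.mk.injEq]; exact ⟨le_antisymm hp hc.1, le_antisymm hc.2 hq⟩)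
      refine lt_of_lt_of_le ?_ (le_biSup _ hhmem)
      by_cases hp0' : p = 0
      · have : risk (p, q) (1/2) = ⊤ := by
          rw [risk]
          simp only
          rw [KLoss, if_pos (Or.inl ⟨by norm_num, hp0'⟩)]
          rw [ENNReal.mul_top (ne_of_gt (ENNReal.ofReal_pos.mpr (by norm_num))), top_add]
        rw [this]; exact ENNReal.ofReal_lt_top
      by_cases hq1' : q = 1
      · have hK : KLoss (1/2) q = ⊤ := by
          rw [KLoss]; exact if_pos (Or.inr ⟨by norm_num, hq1'⟩)
        have : risk (p, q) (1/2) = ⊤ := by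
          rw [risk]
          simp only
          rw [hK, ENNReal.mul_top (ne_of_gt (ENNReal.ofReal_pos.mpr (by norm_num))), add_top]
        rw [this]; exact ENNReal.ofReal_lt_top
      have hppos : 0 < p := lt_of_le_of_ne hp0 (Ne.symm hp0')
      have hplt : p < 1 := by linarith
      have hqpos : 0 < q := by linarith
      have hqlt : q < 1 := lt_of_le_of_ne hq1 hq1'
      have ha := kl_nonneg (θ := 1/2) (d := p) (by norm_num) (by norm_num) hppos hplt
      have hb := kl_nonneg (θ := 1/2) (d := q) (by norm_num) (by norm_num) hqpos hqlt
      simp only [risk, KLoss]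
      rw [if_neg (by rintro (⟨-, h⟩ | ⟨-, h⟩); exacts [hp0' h, by rw [h] at hp; norm_num at hp]),
        if_neg (by rintro (⟨-, h⟩ | ⟨-, h⟩); exacts [by rw [h] at hq; norm_num at hq, hq1' h])]
      rw [← ENNReal.ofReal_mul (by norm_num : (0:ℝ) ≤ 1 - 1/2),
        ← ENNReal.ofReal_mul (by norm_num : (0:ℝ) ≤ (1:ℝ)/2),
        ← ENNReal.ofReal_add (mul_nonneg (by norm_num) ha) (mul_nonneg (by norm_num) hb)]
      have lp : Real.log ((1/2)/p) = - Real.log 2 - Real.log p := by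
        rw [Real.log_div (by norm_num) (ne_of_gt hppos), one_div, Real.log_inv]
      have lp' : Real.log ((1-1/2)/(1-p)) = - Real.log 2 - Real.log (1-p) := by
        rw [show (1:ℝ)-1/2 = 1/2 by norm_num,
          Real.log_div (by norm_num) (by linarith : (1:ℝ)-p ≠ 0), one_div, Real.log_inv]
      have lq : Real.log ((1/2)/q) = - Real.log 2 - Real.log q := by
        rw [Real.log_div (by norm_num) (ne_of_gt hqpos), one_div, Real.log_inv]
      have lq' : Real.log ((1-1/2)/(1-q)) = - Real.log 2 - Real.log (1-q) := by
        rw [show (1:ℝ)-1/2 = 1/2 by norm_num,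
          Real.log_div (by norm_num) (by linarith : (1:ℝ)-q ≠ 0), one_div, Real.log_inv]
      have hQle : Real.log (1-q) + Real.log q ≤ 2*Real.log 2 - 2*Real.log 5 := by
        have := prod_log_le (x := 1-q) (by linarith) (by linarith)
        rwa [sub_sub_cancel] at this
      have hPle : Real.log p + Real.log (1-p) ≤ 2*Real.log 2 - 2*Real.log 5 :=
        prod_log_le hppos hp
      have key : Real.log (5/4) <
          (1 - 1/2) * ((1/2) * Real.log ((1/2)/p) + (1-1/2) * Real.log ((1-1/2)/(1-p)))
          + (1/2) * ((1/2) * Real.log ((1/2)/q) + (1-1/2) * Real.log ((1-1/2)/(1-q))) := by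
        rw [lp, lp', lq, lq', log54]
        rcases hstrict with hs | hs
        · have hPlt := prod_log_lt hppos hs
          linarith
        · have hQlt : Real.log (1-q) + Real.log q < 2*Real.log 2 - 2*Real.log 5 := by
            have := prod_log_lt (x := 1-q) (by linarith) (by linarith)
            rwa [sub_sub_cancel] at this
          linarith
      exact (ENNReal.ofReal_lt_ofReal_iff (lt_trans (Real.log_pos (by norm_num)) key)).mpr key
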